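/- Let n ≥ 2, θ ∈ ℝ, L > 0, ζ_n = exp(2πi/n), and set μ_j = 2cos(θ + 2π(j−1)/n) for j = 1, …, n. Let δ : [0, L] → ℝ be a continuous function with s < δ(s) for all s ∈ [0, L]. Then for every C > 0 there exist C′ > 0 and t₀ > 0 such that for all t ≥ t₀ the following holds: if R : [0,L] → M_n(ℂ) is continuous with |R(s)_{kl}| ≤ C · t^{−1/(2n)} · e^{−2|1 − ζ_n^{k−l}| · t^{1/n} · δ(s)} for all s and all 1 ≤ k, l ≤ n, and Φ : [0,L] → M_n(ℂ) is differentiable with Φ(0) = Id and Φ′(s) = (t^{1/n}·diag(μ₁,…,μ_n) + R(s))·Φ(s) for all s ∈ [0,L], then ‖diag(e^{−L t^{1/n} μ₁}, …, e^{−L t^{1/n} μ_n}) · Φ(L) − Id‖ ≤ C′ · t^{−1/(2n)}. -/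

import Mathlib

open Set

attribute [local instance] Matrix.linftyOpNormedAddCommGroup Matrix.linftyOpNormedRing
  Matrix.linftyOpNormedAlgebra

/-- `ζ_n = exp(2πi/n)`. -/
noncomputable def zeta (n : ℕ) : ℂ := Complex.exp (2 * Real.pi * Complex.I / n)

lemma diag_sum {n : ℕ} (d : Fin n → ℂ) :
    Matrix.diagonal d = ∑ j, d j • Matrix.single j j (1 : ℂ) := by
  ext i k
  simp only [Matrix.sum_apply, Matrix.smul_apply, Matrix.single, Matrix.of_apply,
    smul_ite, smul_eq_mul, mul_one, smul_zero]
  by_cases h : i = k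
  · subst h
    rw [Matrix.diagonal_apply_eq, Finset.sum_eq_single i]
    · simp
    · intro j _ hj; simp [hj]
    · simp
  · rw [Matrix.diagonal_apply_ne _ h]
    symm
    apply Finset.sum_eq_zero
    intro j _
    by_cases hj : j = i
    · subst hj; simp [h]
    · simp [hj]

lemma hasDerivAt_diag_exp {n : ℕ} (b : Fin n → ℝ) (s : ℝ) :
    HasDerivAt (fun u : ℝ => Matrix.diagonal (fun j => ((Real.exp (-(u * b j)) : ℝ) : ℂ)))
      (Matrix.diagonal fun j => ((-(b j) * Real.exp (-(s * b j)) : ℝ) : ℂ)) s := by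
  have e : (fun u : ℝ => Matrix.diagonal (fun j => ((Real.exp (-(u * b j)) : ℝ) : ℂ)))
      = fun u => ∑ j, ((Real.exp (-(u * b j)) : ℝ) : ℂ) • Matrix.single j j (1 : ℂ) :=
    funext fun u => diag_sum _
  rw [e, diag_sum]
  refine HasDerivAt.fun_sum fun j _ => ?_
  have h : HasDerivAt (fun u : ℝ => ((Real.exp (-(u * b j)) : ℝ) : ℂ))
      ((-(b j) * Real.exp (-(s * b j)) : ℝ) : ℂ) s := by
    have h1 : HasDerivAt (fun u : ℝ => Real.exp (-(u * b j)))
        (Real.exp (-(s * b j)) * -(b j)) s := ((hasDerivAt_mul_const (b j)).neg).exp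
    have h2 := h1.ofReal_comp
    convert h2 using 1
    push_cast
    ring
  exact h.smul_const _

lemma norm_le_of_entries {n : ℕ} (M : Matrix (Fin n) (Fin n) ℂ) (c : ℝ) (hc : 0 ≤ c)
    (h : ∀ k l, ‖M k l‖ ≤ c) : ‖M‖ ≤ n * c := by
  rw [Matrix.linfty_opNorm_def]
  have hb : (Finset.univ.sup fun i : Fin n => ∑ j, ‖M i j‖₊) ≤ c.toNNReal * (n : NNReal) := by
    refine Finset.sup_le fun i _ => ?_
    calc ∑ j, ‖M i j‖₊ ≤ ∑ _j : Fin n, c.toNNReal := by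
          refine Finset.sum_le_sum fun j _ => ?_
          rw [← NNReal.coe_le_coe, coe_nnnorm, Real.coe_toNNReal c hc]
          exact h i j
      _ = c.toNNReal * (n : NNReal) := by
          simp [Finset.sum_const, Finset.card_univ, mul_comm]
  calc ((Finset.univ.sup fun i : Fin n => ∑ j, ‖M i j‖₊ : NNReal) : ℝ)
      ≤ ((c.toNNReal * (n : NNReal) : NNReal) : ℝ) := by exact_mod_cast hb
    _ = n * c := by
        push_cast
        rw [Real.coe_toNNReal c hc]
        ring

lemma exp_sub_one_le' {x : ℝ} (hx : 0 ≤ x) : Real.exp x - 1 ≤ x * Real.exp x := by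
  have h := Real.add_one_le_exp (-x)
  rw [Real.exp_neg] at h
  have h2 := Real.exp_pos x
  have h3 : (-x + 1) * Real.exp x ≤ 1 := by
    have := mul_le_mul_of_nonneg_right h h2.le
    rwa [inv_mul_cancel₀ h2.ne'] at this
  nlinarith

lemma cos_diff_le {n : ℕ} (hn : 0 < n) (θ : ℝ) (k l : Fin n) :
    2 * Real.cos (θ + 2 * Real.pi * (l : ℝ) / n) - 2 * Real.cos (θ + 2 * Real.pi * (k : ℝ) / n)
      ≤ 2 * ‖1 - zeta n ^ ((k : ℤ) - (l : ℤ))‖ := by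
  have hnC : (n : ℂ) ≠ 0 := Nat.cast_ne_zero.2 hn.ne'
  set A : ℝ := θ + 2 * Real.pi * (l : ℝ) / n with hA
  set B : ℝ := θ + 2 * Real.pi * (k : ℝ) / n with hB
  set x : ℝ := 2 * Real.pi * ((k : ℝ) - (l : ℝ)) / n with hx
  have h3 : zeta n ^ ((k : ℤ) - (l : ℤ)) = Complex.exp ((x : ℂ) * Complex.I) := by
    rw [zeta, ← Complex.exp_int_mul]
    congr 1
    rw [hx]
    push_cast
    field_simp
  have h2 : Complex.exp ((A : ℂ) * Complex.I) - Complex.exp ((B : ℂ) * Complex.I)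
      = Complex.exp ((A : ℂ) * Complex.I) * (1 - Complex.exp ((x : ℂ) * Complex.I)) := by
    rw [mul_sub, mul_one, ← Complex.exp_add]
    congr 1
    rw [hA, hB, hx]
    push_cast
    field_simp
    ring
  have h1 : Real.cos A - Real.cos B
      ≤ ‖Complex.exp ((A : ℂ) * Complex.I) - Complex.exp ((B : ℂ) * Complex.I)‖ := by
    rw [← Complex.exp_ofReal_mul_I_re A, ← Complex.exp_ofReal_mul_I_re B]
    calc (Complex.exp ((A : ℂ) * Complex.I)).re - (Complex.exp ((B : ℂ) * Complex.I)).re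
        = (Complex.exp ((A : ℂ) * Complex.I) - Complex.exp ((B : ℂ) * Complex.I)).re := by
          rw [Complex.sub_re]
      _ ≤ ‖_‖ := Complex.re_le_norm _
  rw [h2, norm_mul, Complex.norm_exp_ofReal_mul_I, one_mul] at h1
  rw [h3]
  linarith

lemma aux_gronwall {n : ℕ} (hn : 0 < n) {L : ℝ} (hL : 0 < L) (b : Fin n → ℝ)
    (R : ℝ → Matrix (Fin n) (Fin n) ℂ) {K : ℝ} (hK : 0 < K)
    (hB : ∀ s ∈ Icc (0 : ℝ) L,
      ‖(Matrix.diagonal fun j => ((Real.exp (-(s * b j)) : ℝ) : ℂ)) * R s *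
        (Matrix.diagonal fun j => ((Real.exp (s * b j) : ℝ) : ℂ))‖ ≤ K)
    (Φ : ℝ → Matrix (Fin n) (Fin n) ℂ) (hΦ0 : Φ 0 = 1)
    (hΦ' : ∀ s ∈ Icc (0 : ℝ) L, HasDerivWithinAt Φ
      ((Matrix.diagonal (fun j => ((b j : ℝ) : ℂ)) + R s) * Φ s) (Icc 0 L) s) :
    ‖(Matrix.diagonal fun j => ((Real.exp (-(L * b j)) : ℝ) : ℂ)) * Φ L - 1‖
      ≤ Real.exp (K * L) - 1 := by
  haveI : Nonempty (Fin n) := Fin.pos_iff_nonempty.1 hn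
  set D : Matrix (Fin n) (Fin n) ℂ := Matrix.diagonal (fun j => ((b j : ℝ) : ℂ)) with hD
  set Em : ℝ → Matrix (Fin n) (Fin n) ℂ :=
    fun s => Matrix.diagonal fun j => ((Real.exp (-(s * b j)) : ℝ) : ℂ) with hEm
  set Emi : ℝ → Matrix (Fin n) (Fin n) ℂ :=
    fun s => Matrix.diagonal fun j => ((Real.exp (s * b j) : ℝ) : ℂ) with hEmi
  set Ψ : ℝ → Matrix (Fin n) (Fin n) ℂ := fun s => Em s * Φ s with hΨ
  set B : ℝ → Matrix (Fin n) (Fin n) ℂ := fun s => Em s * R s * Emi s with hBdef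
  have hEmiEm : ∀ s : ℝ, Emi s * Em s = 1 := by
    intro s
    rw [hEmi, hEm]
    rw [Matrix.diagonal_mul_diagonal]
    have : (fun j => ((Real.exp (s * b j) : ℝ) : ℂ) * ((Real.exp (-(s * b j)) : ℝ) : ℂ))
        = fun _ => (1 : ℂ) := by
      funext j
      rw [← Complex.ofReal_mul, ← Real.exp_add]
      simp
    rw [this, Matrix.diagonal_one]
  have hΨ' : ∀ s ∈ Icc (0 : ℝ) L, HasDerivWithinAt Ψ (B s * Ψ s) (Icc 0 L) s := by
    intro s hs
    have h1 := (hasDerivAt_diag_exp b s).hasDerivWithinAt (s := Icc (0 : ℝ) L)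
    have h2 := h1.mul (hΦ' s hs)
    have hd : (Matrix.diagonal fun j => ((-(b j) * Real.exp (-(s * b j)) : ℝ) : ℂ))
        = -(D * Em s) := by
      rw [hD, hEm, Matrix.diagonal_mul_diagonal]
      have e : (fun j => ((-(b j) * Real.exp (-(s * b j)) : ℝ) : ℂ))
          = fun j => -(((b j : ℝ) : ℂ) * ((Real.exp (-(s * b j)) : ℝ) : ℂ)) :=
        funext fun j => by push_cast; ring
      rw [e, Matrix.diagonal_neg]
    have hcomm : Em s * D = D * Em s := by
      rw [hD, hEm, Matrix.diagonal_mul_diagonal, Matrix.diagonal_mul_diagonal]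
      have e : (fun j => ((Real.exp (-(s * b j)) : ℝ) : ℂ) * ((b j : ℝ) : ℂ))
          = fun j => ((b j : ℝ) : ℂ) * ((Real.exp (-(s * b j)) : ℝ) : ℂ) :=
        funext fun j => mul_comm _ _
      rw [e]
    have heq : B s * Ψ s
        = (Matrix.diagonal fun j => ((-(b j) * Real.exp (-(s * b j)) : ℝ) : ℂ)) * Φ s
          + Em s * ((D + R s) * Φ s) := by
      rw [hd, neg_mul]
      have e1 : Em s * ((D + R s) * Φ s) = D * Em s * Φ s + Em s * R s * Φ s := by
        rw [add_mul, mul_add, ← mul_assoc, ← mul_assoc, hcomm]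
      rw [e1, hBdef, hΨ]
      have e2 : Em s * R s * Emi s * (Em s * Φ s) = Em s * R s * Φ s := by
        rw [mul_assoc (Em s * R s), ← mul_assoc (Emi s), hEmiEm, one_mul]
      rw [e2]
      abel
    rw [heq]
    exact h2
  have hΨc : ContinuousOn Ψ (Icc 0 L) := fun s hs => (hΨ' s hs).continuousWithinAt
  have hΨ0 : Ψ 0 = 1 := by
    rw [hΨ]
    simp only [hΦ0, mul_one, hEm]
    simp
  have key := norm_le_gronwallBound_of_norm_deriv_right_le (E := Matrix (Fin n) (Fin n) ℂ)
    (f := fun s => Ψ s - 1) (f' := fun s => B s * Ψ s) (a := 0) (b := L)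
    (δ := 0) (K := K) (ε := K)
    (hΨc.sub continuousOn_const)
    (by
      intro x hx
      have h := (hΨ' x ⟨hx.1, hx.2.le⟩).sub_const 1
      refine h.mono_of_mem_nhdsWithin ?_
      rw [mem_nhdsWithin]
      exact ⟨Iio L, isOpen_Iio, hx.2, fun y hy => ⟨le_trans hx.1 hy.2, hy.1.le⟩⟩)
    (by simp [hΨ0])
    (by
      intro x hx
      have h1 : ‖B x * Ψ x‖ ≤ ‖B x‖ * ‖Ψ x‖ := norm_mul_le _ _
      have h2 : ‖B x‖ ≤ K := hB x ⟨hx.1, hx.2.le⟩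
      have h3 : ‖Ψ x‖ ≤ ‖Ψ x - 1‖ + 1 := by
        calc ‖Ψ x‖ = ‖Ψ x - 1 + 1‖ := by rw [sub_add_cancel]
          _ ≤ ‖Ψ x - 1‖ + ‖(1 : Matrix (Fin n) (Fin n) ℂ)‖ := norm_add_le _ _
          _ = ‖Ψ x - 1‖ + 1 := by rw [norm_one]
      have h4 : 0 ≤ ‖Ψ x‖ := norm_nonneg _
      have h5 : 0 ≤ ‖B x‖ := norm_nonneg _
      nlinarith)
    L (right_mem_Icc.2 hL.le)
  rw [gronwallBound_of_K_ne_0 hK.ne'] at key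
  simp only [sub_zero, zero_mul, zero_add, div_self hK.ne'] at key
  calc ‖(Matrix.diagonal fun j => ((Real.exp (-(L * b j)) : ℝ) : ℂ)) * Φ L - 1‖
      = ‖Ψ L - 1‖ := rfl
    _ ≤ 1 * (Real.exp (K * L) - 1) := key
    _ = Real.exp (K * L) - 1 := one_mul _

/-- ODE core of the parallel-transport asymptotics: with `μ_j = 2cos(θ + 2π(j−1)/n)` and a
continuous `δ` with `s < δ(s)`, for every `C > 0` there are `C′ > 0`, `t₀ > 0` so that for
`t ≥ t₀`: if `|R(s)_{kl}| ≤ C·t^{−1/(2n)}·e^{−2|1−ζ_n^{k−l}|·t^{1/n}·δ(s)}` and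
`Φ(0) = Id`, `Φ′(s) = (t^{1/n}·diag(μ₁,…,μ_n) + R(s))·Φ(s)`, then
`‖diag(e^{−L t^{1/n} μ_j}) · Φ(L) − Id‖ ≤ C′·t^{−1/(2n)}`. -/
theorem statement11 (n : ℕ) (hn : 2 ≤ n) (θ L : ℝ) (hL : 0 < L)
    (δ : ℝ → ℝ) (hδc : ContinuousOn δ (Icc 0 L)) (hδ : ∀ s ∈ Icc (0 : ℝ) L, s < δ s)
    (C : ℝ) (hC : 0 < C) :
    ∃ C' : ℝ, 0 < C' ∧ ∃ t₀ : ℝ, 0 < t₀ ∧ ∀ t : ℝ, t₀ ≤ t →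
      ∀ R : ℝ → Matrix (Fin n) (Fin n) ℂ, ContinuousOn R (Icc 0 L) →
      (∀ s ∈ Icc (0 : ℝ) L, ∀ k l : Fin n,
        ‖R s k l‖ ≤ C * t ^ (-(1 / (2 * (n : ℝ)))) *
          Real.exp (-2 * ‖1 - zeta n ^ ((k : ℤ) - (l : ℤ))‖ *
            t ^ ((1 : ℝ) / n) * δ s)) →
      ∀ Φ : ℝ → Matrix (Fin n) (Fin n) ℂ, Φ 0 = 1 →
      (∀ s ∈ Icc (0 : ℝ) L,
        HasDerivWithinAt Φ
          ((Matrix.diagonal (fun j : Fin n =>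
              ((t ^ ((1 : ℝ) / n) * (2 * Real.cos (θ + 2 * Real.pi * (j : ℝ) / n)) : ℝ) : ℂ))
            + R s) * Φ s) (Icc 0 L) s) →
      ‖Matrix.diagonal (fun j : Fin n =>
          ((Real.exp (-(L * t ^ ((1 : ℝ) / n) *
              (2 * Real.cos (θ + 2 * Real.pi * (j : ℝ) / n)))) : ℝ) : ℂ)) * Φ L - 1‖
        ≤ C' * t ^ (-(1 / (2 * (n : ℝ)))) := by
  have hnpos : 0 < n := by omega
  have hn0 : (0 : ℝ) < n := by exact_mod_cast hnpos
  refine ⟨(n : ℝ) * C * L * Real.exp ((n : ℝ) * C * L), by positivity, 1, one_pos, ?_⟩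
  intro t ht R hRc hRb Φ hΦ0 hΦ'
  have ht0 : (0 : ℝ) < t := lt_of_lt_of_le one_pos ht
  have ht1pos : (0 : ℝ) < t ^ ((1 : ℝ) / n) := Real.rpow_pos_of_pos ht0 _
  have htσ : (0 : ℝ) < t ^ (-(1 / (2 * (n : ℝ)))) := Real.rpow_pos_of_pos ht0 _
  have htσ1 : t ^ (-(1 / (2 * (n : ℝ)))) ≤ 1 :=
    Real.rpow_le_one_of_one_le_of_nonpos ht (neg_nonpos.2 (by positivity))
  set b : Fin n → ℝ :=
    fun j => t ^ ((1 : ℝ) / n) * (2 * Real.cos (θ + 2 * Real.pi * (j : ℝ) / n)) with hbdef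
  have hb2 : ∀ j : Fin n,
      t ^ ((1 : ℝ) / n) * (2 * Real.cos (θ + 2 * Real.pi * (j : ℝ) / n)) = b j := fun j => rfl
  set K : ℝ := (n : ℝ) * (C * t ^ (-(1 / (2 * (n : ℝ))))) with hKdef
  have hK : 0 < K := by rw [hKdef]; positivity
  have hB : ∀ s ∈ Icc (0 : ℝ) L,
      ‖(Matrix.diagonal fun j => ((Real.exp (-(s * b j)) : ℝ) : ℂ)) * R s *
        (Matrix.diagonal fun j => ((Real.exp (s * b j) : ℝ) : ℂ))‖ ≤ K := by
    intro s hs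
    rw [hKdef]
    refine norm_le_of_entries _ _ (by positivity) ?_
    intro k l
    rw [Matrix.mul_diagonal, Matrix.diagonal_mul, norm_mul, norm_mul,
      Complex.norm_real, Complex.norm_real, Real.norm_eq_abs, Real.norm_eq_abs, Real.abs_exp, Real.abs_exp]
    have hR := hRb s hs k l
    set a : ℝ := ‖1 - zeta n ^ ((k : ℤ) - (l : ℤ))‖ with hadef
    have ha : 0 ≤ a := by rw [hadef]; exact norm_nonneg _
    have hcos := cos_diff_le hnpos θ k l
    have hbl : b l = t ^ ((1 : ℝ) / n) * (2 * Real.cos (θ + 2 * Real.pi * (l : ℝ) / n)) := rfl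
    have hbk : b k = t ^ ((1 : ℝ) / n) * (2 * Real.cos (θ + 2 * Real.pi * (k : ℝ) / n)) := rfl
    calc Real.exp (-(s * b k)) * ‖R s k l‖ * Real.exp (s * b l)
        ≤ Real.exp (-(s * b k)) * (C * t ^ (-(1 / (2 * (n : ℝ)))) *
            Real.exp (-2 * a * t ^ ((1 : ℝ) / n) * δ s)) * Real.exp (s * b l) := by
          exact mul_le_mul_of_nonneg_right
            (mul_le_mul_of_nonneg_left hR (Real.exp_pos _).le) (Real.exp_pos _).le
      _ = (C * t ^ (-(1 / (2 * (n : ℝ))))) *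
            Real.exp (-(s * b k) + -2 * a * t ^ ((1 : ℝ) / n) * δ s + s * b l) := by
          rw [Real.exp_add, Real.exp_add]
          ring
      _ ≤ (C * t ^ (-(1 / (2 * (n : ℝ))))) * 1 := by
          refine mul_le_mul_of_nonneg_left ?_ (by positivity)
          rw [Real.exp_le_one_iff]
          have hs0 : 0 ≤ s := hs.1
          have hsδ : s ≤ δ s := (hδ s hs).le
          have ht1 : (0 : ℝ) ≤ t ^ ((1 : ℝ) / n) := ht1pos.le
          have h1 : b l - b k ≤ 2 * a * t ^ ((1 : ℝ) / n) := by
            rw [hbl, hbk]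
            nlinarith [mul_le_mul_of_nonneg_left hcos ht1]
          nlinarith [mul_le_mul_of_nonneg_left h1 hs0,
            mul_le_mul_of_nonneg_left hsδ (by positivity : (0 : ℝ) ≤ 2 * a * t ^ ((1 : ℝ) / n))]
      _ = C * t ^ (-(1 / (2 * (n : ℝ)))) := mul_one _
  simp only [hb2] at hΦ'
  have main := aux_gronwall hnpos hL b R hK hB Φ hΦ0 hΦ'
  have hgoal : (fun j : Fin n =>
      ((Real.exp (-(L * t ^ ((1 : ℝ) / n) *
          (2 * Real.cos (θ + 2 * Real.pi * (j : ℝ) / n)))) : ℝ) : ℂ))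
      = fun j : Fin n => ((Real.exp (-(L * b j)) : ℝ) : ℂ) := by
    funext j
    have : L * t ^ ((1 : ℝ) / n) * (2 * Real.cos (θ + 2 * Real.pi * (j : ℝ) / n))
        = L * b j := mul_assoc _ _ _
    rw [this]
  rw [hgoal]
  calc ‖(Matrix.diagonal fun j : Fin n => ((Real.exp (-(L * b j)) : ℝ) : ℂ)) * Φ L - 1‖
      ≤ Real.exp (K * L) - 1 := main
    _ ≤ K * L * Real.exp (K * L) := exp_sub_one_le' (by positivity)
    _ ≤ K * L * Real.exp ((n : ℝ) * C * L) := by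
        refine mul_le_mul_of_nonneg_left (Real.exp_le_exp.2 ?_) (by positivity)
        have hKle : K ≤ (n : ℝ) * C := by
          rw [hKdef]
          nlinarith
        nlinarith
    _ = (n : ℝ) * C * L * Real.exp ((n : ℝ) * C * L) * t ^ (-(1 / (2 * (n : ℝ)))) := by
        rw [hKdef]
        ring
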